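/- Let u, v : ℝ³ → [0,∞) be integrable functions that vanish almost everywhere outside some compact set and satisfy ∫ u dx = ∫ v dx = 1. Then there exists a 1-Lipschitz function φ : ℝ³ → ℝ such that for every 1-Lipschitz function ψ : ℝ³ → ℝ, ∫ ψ(x)(u(x) − v(x)) dx ≤ ∫ φ(x)(u(x) − v(x)) dx. -/
import Mathlib


open MeasureTheory

local notation "ℝ³" => EuclideanSpace ℝ (Fin 3)

theorem stmt_15 (u v : ℝ³ → ℝ) (hu0 : ∀ x, 0 ≤ u x) (hv0 : ∀ x, 0 ≤ v x)
    (hu : Integrable u volume) (hv : Integrable v volume)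
    (hucpt : ∃ K : Set ℝ³, IsCompact K ∧ ∀ᵐ x ∂volume, x ∉ K → u x = 0)
    (hvcpt : ∃ K : Set ℝ³, IsCompact K ∧ ∀ᵐ x ∂volume, x ∉ K → v x = 0)
    (huint : ∫ x, u x = 1) (hvint : ∫ x, v x = 1) :
    ∃ φ : ℝ³ → ℝ, (∀ x y : ℝ³, |φ x - φ y| ≤ ‖x - y‖) ∧
      ∀ ψ : ℝ³ → ℝ, (∀ x y : ℝ³, |ψ x - ψ y| ≤ ‖x - y‖) →
        (∫ x, ψ x * (u x - v x)) ≤ ∫ x, φ x * (u x - v x) := by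
  classical
  obtain ⟨Ku, hKu, hKuae⟩ := hucpt
  obtain ⟨Kv, hKv, hKvae⟩ := hvcpt
  set K : Set ℝ³ := Ku ∪ Kv with hKdef
  have hK : IsCompact K := hKu.union hKv
  obtain ⟨R, hR0, hKR⟩ : ∃ R : ℝ, 0 ≤ R ∧ K ⊆ Metric.closedBall 0 R := by
    obtain ⟨R, hR⟩ := hK.isBounded.subset_closedBall 0
    exact ⟨max R 0, le_max_right _ _,
      hR.trans (Metric.closedBall_subset_closedBall (le_max_left _ _))⟩
  have hae : ∀ᵐ x ∂(volume : Measure ℝ³), x ∉ K → u x = 0 ∧ v x = 0 := by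
    filter_upwards [hKuae, hKvae] with x h1 h2 hx
    exact ⟨h1 fun h => hx (Or.inl h), h2 fun h => hx (Or.inr h)⟩
  set Lip : (ℝ³ → ℝ) → Prop := fun ψ => ∀ x y, |ψ x - ψ y| ≤ ‖x - y‖ with hLipdef
  set I : (ℝ³ → ℝ) → ℝ := fun ψ => ∫ x, ψ x * (u x - v x) with hIdef
  have hlip_cont : ∀ ψ, Lip ψ → Continuous ψ := by
    intro ψ h
    refine (LipschitzWith.of_dist_le_mul (K := 1) fun x y => ?_).continuous
    simpa [Real.dist_eq, dist_eq_norm] using h x y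
  -- a.e. bound
  have hbound : ∀ ψ : ℝ³ → ℝ, Lip ψ →
      ∀ᵐ x ∂(volume : Measure ℝ³),
        ‖ψ x * (u x - v x)‖ ≤ (|ψ 0| + R) * (u x + v x) := by
    intro ψ hψ
    filter_upwards [hae] with x hx
    by_cases hxK : x ∈ K
    · have hxR : ‖x‖ ≤ R := by
        simpa using hKR hxK
      have h1 : |ψ x| ≤ |ψ 0| + R := by
        have h := hψ x 0
        have h' : |ψ x| - |ψ 0| ≤ |ψ x - ψ 0| := abs_sub_abs_le_abs_sub _ _
        have hx0 : ‖x - 0‖ = ‖x‖ := by simp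
        nlinarith [abs_nonneg (ψ 0)]
      have h2 : |u x - v x| ≤ u x + v x := by
        have := abs_sub (u x) (v x)
        rw [abs_of_nonneg (hu0 x), abs_of_nonneg (hv0 x)] at this
        exact this
      calc ‖ψ x * (u x - v x)‖ = |ψ x| * |u x - v x| := by
            simp [abs_mul]
        _ ≤ (|ψ 0| + R) * (u x + v x) := by
            apply mul_le_mul h1 h2 (abs_nonneg _)
            positivity
    · obtain ⟨hu', hv'⟩ := hx hxK
      simp [hu', hv']
  have hint : ∀ ψ, Lip ψ → Integrable (fun x => ψ x * (u x - v x)) := by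
    intro ψ hψ
    refine Integrable.mono' (((hu.add hv).const_mul (|ψ 0| + R))) ?_ (hbound ψ hψ)
    exact ((hlip_cont ψ hψ).aestronglyMeasurable).mul (hu.sub hv).aestronglyMeasurable
  have hIle : ∀ ψ, Lip ψ → ψ 0 = 0 → I ψ ≤ R * 2 := by
    intro ψ hψ hψ0
    have h1 : I ψ ≤ ∫ x, (|ψ 0| + R) * (u x + v x) := by
      refine integral_mono_ae (hint ψ hψ) ((hu.add hv).const_mul _) ?_
      filter_upwards [hbound ψ hψ] with x hx
      exact (le_abs_self _).trans hx
    have h2 : ∫ x, (|ψ 0| + R) * (u x + v x) = (|ψ 0| + R) * ((∫ x, u x) + ∫ x, v x) := by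
      rw [integral_const_mul, integral_add hu hv]
    rw [h2, huint, hvint, hψ0] at h1
    simp only [abs_zero, zero_add] at h1
    linarith
  set Fs : Set ℝ := I '' {ψ | Lip ψ ∧ ψ 0 = 0} with hFsdef
  have hFne : Fs.Nonempty := ⟨I 0, ⟨0, ⟨fun x y => by simp, rfl⟩, rfl⟩⟩
  have hFbdd : BddAbove Fs := by
    refine ⟨R * 2, ?_⟩
    rintro _ ⟨ψ, ⟨h1, h2⟩, rfl⟩
    exact hIle ψ h1 h2
  obtain ⟨a, -, haS, hamem⟩ := exists_seq_tendsto_sSup hFne hFbdd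
  have hamem' : ∀ n, ∃ ψ, (Lip ψ ∧ ψ 0 = 0) ∧ I ψ = a n := fun n => hamem n
  choose ψs hψsp haeq using hamem'
  have hψlip : ∀ n, Lip (ψs n) := fun n => (hψsp n).1
  have hψ0 : ∀ n, ψs n 0 = 0 := fun n => (hψsp n).2
  -- countable dense set and subsequence extraction
  obtain ⟨D, hDc, hDd⟩ := TopologicalSpace.exists_countable_dense ℝ³
  haveI : Countable D := hDc.to_subtype
  have hcomp : IsCompact (Set.univ.pi fun d : D => Set.Icc (-(‖(d : ℝ³)‖)) ‖(d : ℝ³)‖) :=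
    isCompact_univ_pi fun d => isCompact_Icc
  have hgmem : ∀ n, (fun d : D => ψs n d) ∈
      Set.univ.pi fun d : D => Set.Icc (-(‖(d : ℝ³)‖)) ‖(d : ℝ³)‖ := by
    intro n d _
    have h := hψlip n d 0
    rw [hψ0 n] at h
    simp only [sub_zero] at h
    exact Set.mem_Icc.mpr (abs_le.mp h)
  obtain ⟨f, -, k, hkmono, hktend⟩ := hcomp.tendsto_subseq hgmem
  have hDtend : ∀ d : D, Filter.Tendsto (fun n => ψs (k n) (d : ℝ³)) Filter.atTop (nhds (f d)) := by
    intro d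
    exact (tendsto_pi_nhds.mp hktend) d
  -- Cauchy at every point
  have hcauchy : ∀ x : ℝ³, CauchySeq fun n => ψs (k n) x := by
    intro x
    rw [Metric.cauchySeq_iff]
    intro ε hε
    obtain ⟨d, hd1, hd2⟩ := Metric.dense_iff.mp hDd x (ε / 4) (by positivity)
    have hcd : CauchySeq fun n => ψs (k n) d := (hDtend ⟨d, hd2⟩).cauchySeq
    obtain ⟨N, hN⟩ := Metric.cauchySeq_iff.mp hcd (ε / 4) (by positivity)
    refine ⟨N, fun m hm n hn => ?_⟩
    have t1 : dist (ψs (k m) x) (ψs (k m) d) ≤ dist x d := by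
      rw [Real.dist_eq, dist_eq_norm]; exact hψlip (k m) x d
    have t3 : dist (ψs (k n) d) (ψs (k n) x) ≤ dist d x := by
      rw [Real.dist_eq, dist_eq_norm]; exact hψlip (k n) d x
    have t2 := hN m hm n hn
    have hdx' : dist d x < ε / 4 := by rw [Metric.mem_ball] at hd1; exact hd1
    have hdx : dist x d < ε / 4 := by rwa [dist_comm]
    calc dist (ψs (k m) x) (ψs (k n) x)
        ≤ dist (ψs (k m) x) (ψs (k m) d) + dist (ψs (k m) d) (ψs (k n) d)
            + dist (ψs (k n) d) (ψs (k n) x) := dist_triangle4 _ _ _ _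
      _ < ε := by
          have w1 := t1.trans_lt hdx
          have w3 := t3.trans_lt hdx'
          linarith [t2]
  have hconv : ∀ x : ℝ³, ∃ L, Filter.Tendsto (fun n => ψs (k n) x) Filter.atTop (nhds L) :=
    fun x => cauchySeq_tendsto_of_complete (hcauchy x)
  choose φ hφ using hconv
  have hφlip : Lip φ := by
    intro x y
    have h : Filter.Tendsto (fun n => |ψs (k n) x - ψs (k n) y|) Filter.atTop
        (nhds |φ x - φ y|) := ((hφ x).sub (hφ y)).abs
    exact le_of_tendsto h (Filter.Eventually.of_forall fun n => hψlip (k n) x y)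
  have hφ0 : φ 0 = 0 := by
    have h : Filter.Tendsto (fun n => ψs (k n) 0) Filter.atTop (nhds (0 : ℝ)) := by
      simp only [hψ0]
      exact tendsto_const_nhds (α := ℕ) (f := Filter.atTop) (x := (0 : ℝ))
    exact tendsto_nhds_unique (hφ 0) h
  -- dominated convergence
  have hItend : Filter.Tendsto (fun n => I (ψs (k n))) Filter.atTop (nhds (I φ)) := by
    refine tendsto_integral_of_dominated_convergence (fun x => R * (u x + v x))
      (fun n => ((hlip_cont _ (hψlip (k n))).aestronglyMeasurable).mul
        (hu.sub hv).aestronglyMeasurable)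
      ((hu.add hv).const_mul R) ?_ ?_
    · intro n
      have := hbound (ψs (k n)) (hψlip (k n))
      simpa [hψ0] using this
    · exact Filter.Eventually.of_forall fun x => (hφ x).mul tendsto_const_nhds
  have hItendS : Filter.Tendsto (fun n => I (ψs (k n))) Filter.atTop (nhds (sSup Fs)) := by
    have : (fun n => I (ψs (k n))) = fun n => a (k n) := by
      funext n; exact haeq (k n)
    rw [this]
    exact haS.comp hkmono.tendsto_atTop
  have hIφ : I φ = sSup Fs := tendsto_nhds_unique hItend hItendS
  refine ⟨φ, hφlip, ?_⟩
  intro ψ hψ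
  have hψ'lip : Lip fun x => ψ x - ψ 0 := by
    intro x y
    simpa using hψ x y
  have hmem : I (fun x => ψ x - ψ 0) ∈ Fs :=
    ⟨fun x => ψ x - ψ 0, ⟨hψ'lip, by simp⟩, rfl⟩
  have h1 : I (fun x => ψ x - ψ 0) ≤ sSup Fs := le_csSup hFbdd hmem
  have hc : Integrable (fun x => ψ 0 * (u x - v x)) := (hu.sub hv).const_mul _
  have h2 : I (fun x => ψ x - ψ 0) = I ψ - ψ 0 * ((∫ x, u x) - ∫ x, v x) := by
    simp only [hIdef]
    rw [show (fun x => (ψ x - ψ 0) * (u x - v x))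
        = fun x => ψ x * (u x - v x) - ψ 0 * (u x - v x) from by funext x; ring]
    rw [integral_sub (hint ψ hψ) hc, integral_const_mul, integral_sub hu hv]
  rw [huint, hvint] at h2
  simp only [sub_self, mul_zero, sub_zero] at h2
  have : I ψ ≤ I φ := by rw [hIφ, ← h2]; exact h1
  simpa [hIdef] using this
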